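/- Let A ⊆ B be a compatible pair of finite pre-von Neumann algebras admitting a conditional-expectation-like map E_A : B → A, with H_B, Γ, Ω, H_A, λ_A, λ_B, M_A, M_B as in the context, and let e_A be the orthogonal projection of H_B onto H_A. Then for every x ∈ M_B there exists a unique y ∈ M_A such that e_A x e_A ξ = y(e_A ξ) for all ξ ∈ H_B. Writing y = 𝔼_A(x), the map 𝔼_A : M_B → M_A is linear, unital, satisfies 𝔼_A(x*) = 𝔼_A(x)*, and is trace-preserving in the sense that ⟨𝔼_A(x)Γ(a), Ω⟩_{H_A} = ⟨xΓ(a), Ω⟩_{H_B} for all x ∈ M_B and a ∈ A. -/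

import Mathlib

open ContinuousLinearMap (adjoint)

/-! Auxiliary lemmas -/

open ContinuousLinearMap in
/-- Extend a bounded densely-defined linear map to a continuous linear map. -/
lemma exists_clm_extend {𝕜 : Type*} [NontriviallyNormedField 𝕜]
    {B : Type*} [AddCommGroup B] [Module 𝕜 B]
    {H : Type*} [NormedAddCommGroup H] [NormedSpace 𝕜 H] [CompleteSpace H]
    (Γ : B →ₗ[𝕜] H) (hΓinj : Function.Injective Γ) (hΓdense : DenseRange Γ)
    (g : B →ₗ[𝕜] H) (C : ℝ) (hbound : ∀ b, ‖g b‖ ≤ C * ‖Γ b‖) :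
    ∃ T : H →L[𝕜] H, ∀ b, T (Γ b) = g b := by
  set S := LinearMap.range Γ with hS
  let eqv : B ≃ₗ[𝕜] S := LinearEquiv.ofInjective Γ hΓinj
  let f₀ : S →ₗ[𝕜] H := g.comp eqv.symm.toLinearMap
  have hcoe : ∀ b : B, ((eqv b : S) : H) = Γ b := fun b => rfl
  have hb : ∀ s : S, ‖f₀ s‖ ≤ C * ‖s‖ := by
    intro s
    have h1 : Γ (eqv.symm s) = (s : H) := by
      conv_rhs => rw [← eqv.apply_symm_apply s]
      exact (hcoe _).symm
    have := hbound (eqv.symm s)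
    simpa [f₀, h1] using this
  let f : S →L[𝕜] H := f₀.mkContinuous C hb
  have hdense : DenseRange (S.subtypeL) := by
    have : Set.range (⇑S.subtypeL) = Set.range Γ := by
      rw [Submodule.coe_subtypeL']
      erw [Subtype.range_coe]
      exact LinearMap.coe_range Γ
    unfold DenseRange
    rw [this]; exact hΓdense
  refine ⟨f.extend S.subtypeL,
    fun b => ?_⟩
  have h2 : Γ b = S.subtypeL (eqv b) := rfl
  rw [h2, ContinuousLinearMap.extend_eq _ hdense isUniformEmbedding_subtype_val.isUniformInducing]
  show f₀ (eqv b) = g b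
  simp only [f₀, LinearMap.comp_apply, LinearEquiv.coe_coe]
  rw [eqv.symm_apply_apply b]

/-- Two continuous maps agreeing on a dense range agree everywhere. -/
lemma dense_ext {B H Y : Type*} [TopologicalSpace H] [TopologicalSpace Y] [T2Space Y]
    (Γ : B → H) (hd : DenseRange Γ) {f g : H → Y}
    (hf : Continuous f) (hg : Continuous g) (h : ∀ b, f (Γ b) = g (Γ b)) : ∀ ξ, f ξ = g ξ := by
  intro ξ
  exact congrFun (Continuous.ext_on hd hf hg (by rintro _ ⟨b, rfl⟩; exact h b)) ξ

/-- Two vectors with the same inner ℂ products against a dense range are equal. -/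
lemma dense_inner_ext {B H : Type*} [NormedAddCommGroup H] [InnerProductSpace ℂ H]
    (Γ : B → H) (hd : DenseRange Γ) {u v : H}
    (h : ∀ b, (inner ℂ (Γ b) u : ℂ) = inner ℂ (Γ b) v) : u = v := by
  apply ext_inner_left ℂ
  intro w
  exact dense_ext Γ hd (f := fun w => (inner ℂ w u : ℂ)) (g := fun w => (inner ℂ w v : ℂ))
    (Continuous.inner continuous_id continuous_const)
    (Continuous.inner continuous_id continuous_const) h w

/-- The double commutant of a set of bounded operators. -/
def doubleCommutant {E : Type*} [NormedAddCommGroup E] [InnerProductSpace ℂ E]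
    (S : Set (E →L[ℂ] E)) : Set (E →L[ℂ] E) :=
  Set.centralizer (Set.centralizer S)

set_option maxHeartbeats 4000000 in
/-- For a compatible pair `A ⊆ B` of finite pre-von Neumann algebras with a
conditional-expectation-like map `E_A : B → A`, for every `x ∈ M_B` there is a unique
`y ∈ M_A` with `e_A x e_A ξ = y (e_A ξ)` for all `ξ ∈ H_B`; writing `y = 𝔼_A(x)`, the map
`𝔼_A : M_B → M_A` is linear, unital, star-preserving and trace-preserving in the sense that
`⟨𝔼_A(x)Γ(a), Ω⟩_{H_A} = ⟨xΓ(a), Ω⟩_{H_B}` for `x ∈ M_B`, `a ∈ A`.  (Inner products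
`⟨v, Ω⟩`, linear in the first variable, are rendered via Mathlib's inner ℂ product, linear in
the second variable, as `inner ℂ Ω v`.) -/
theorem stmt_9
    {B : Type*} [Ring B] [Algebra ℂ B] [StarRing B] [StarModule ℂ B]
    (A : StarSubalgebra ℂ B)
    (t : B →ₗ[ℂ] ℂ)
    (ht1 : t 1 = 1)
    (httr : ∀ b₁ b₂ : B, t (b₁ * b₂) = t (b₂ * b₁))
    {H : Type*} [NormedAddCommGroup H] [InnerProductSpace ℂ H] [CompleteSpace H]
    -- `H` is the Hilbert space completion `H_B` of `B`, via the canonical map `Γ`: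
    (Γ : B →ₗ[ℂ] H)
    (hΓ : ∀ b₁ b₂ : B, (inner ℂ (Γ b₁) (Γ b₂) : ℂ) = t (star b₁ * b₂))
    (hΓinj : Function.Injective Γ)
    (hΓdense : DenseRange Γ)
    -- the left regular representation of `B` on `H_B`:
    (lamB : B → H →L[ℂ] H)
    (hlamB : ∀ b b' : B, lamB b (Γ b') = Γ (b * b'))
    -- `K` is the closed subspace `H_A`, the closure of `Γ(A)` in `H_B`:
    (K : Submodule ℂ H) [CompleteSpace K]
    (hK : K = (Submodule.map Γ (Subalgebra.toSubmodule A.toSubalgebra)).topologicalClosure)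
    (hΓA : ∀ a ∈ A, Γ a ∈ K)
    -- the representation `λ_A` of `A` on `H_A`, the restriction of `λ_B`:
    (lamA : B → K →L[ℂ] K)
    (hlamA : ∀ a ∈ A, ∀ ξ : K, ((lamA a ξ : H)) = lamB a (ξ : H))
    -- `E_A : B → A` is a conditional-expectation-like map:
    (EA : B →ₗ[ℂ] B)
    (hEAmem : ∀ b : B, EA b ∈ A)
    (hEAid : ∀ a ∈ A, EA a = a)
    (hEAstar : ∀ b : B, EA (star b) = star (EA b))
    (hEAbimod : ∀ a₁ ∈ A, ∀ a₂ ∈ A, ∀ b : B, EA (a₁ * b * a₂) = a₁ * EA b * a₂)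
    (hEAtr : ∀ b : B, t (EA b) = t b) :
    (∀ x ∈ doubleCommutant (Set.range lamB),
      ∃! y : K →L[ℂ] K, y ∈ doubleCommutant (lamA '' (A : Set B)) ∧
        ∀ ξ : H, Submodule.orthogonalProjectionOnto K (x ((Submodule.orthogonalProjectionOnto K ξ : K) : H)) =
          y (Submodule.orthogonalProjectionOnto K ξ)) ∧
    (∀ EE : (H →L[ℂ] H) → (K →L[ℂ] K),
      (∀ x ∈ doubleCommutant (Set.range lamB),
        EE x ∈ doubleCommutant (lamA '' (A : Set B)) ∧
        ∀ ξ : H, Submodule.orthogonalProjectionOnto K (x ((Submodule.orthogonalProjectionOnto K ξ : K) : H)) =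
          EE x (Submodule.orthogonalProjectionOnto K ξ)) →
      ((∀ x ∈ doubleCommutant (Set.range lamB), ∀ x' ∈ doubleCommutant (Set.range lamB),
          EE (x + x') = EE x + EE x') ∧
       (∀ (c : ℂ), ∀ x ∈ doubleCommutant (Set.range lamB), EE (c • x) = c • EE x) ∧
       EE 1 = 1 ∧
       (∀ x ∈ doubleCommutant (Set.range lamB), EE (star x) = star (EE x)) ∧
       (∀ x ∈ doubleCommutant (Set.range lamB), ∀ a : B, ∀ ha : a ∈ A,
         (inner ℂ (⟨Γ 1, hΓA 1 A.one_mem⟩ : K) (EE x ⟨Γ a, hΓA a ha⟩) : ℂ) =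
         (inner ℂ (Γ 1) (x (Γ a)) : ℂ)))) := by
  have hA1 : (1:B) ∈ A := A.one_mem
  set P : H →L[ℂ] K := Submodule.orthogonalProjectionOnto K with hPdef
  set ι : K →L[ℂ] H := K.subtypeL with hιdef
  have hιapp : ∀ k : K, ι k = (k : H) := fun _ => rfl
  have hPι : ∀ k : K, P (ι k) = k := fun k => Submodule.orthogonalProjectionOnto_mem_subspace_eq_self k
  -- norms of star vectors
  have hnormstar : ∀ b : B, ‖Γ (star b)‖ = ‖Γ b‖ := by
    intro b
    have h1 : (inner ℂ (Γ (star b)) (Γ (star b)) : ℂ) = inner ℂ (Γ b) (Γ b) := by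
      rw [hΓ, hΓ, star_star, httr]
    have h3 : (‖Γ (star b)‖)^2 = (‖Γ b‖)^2 := by
      rw [← inner_self_eq_norm_sq (𝕜 := ℂ), ← inner_self_eq_norm_sq (𝕜 := ℂ), h1]
    calc ‖Γ (star b)‖ = Real.sqrt ((‖Γ (star b)‖)^2) := (Real.sqrt_sq (norm_nonneg _)).symm
      _ = Real.sqrt ((‖Γ b‖)^2) := by rw [h3]
      _ = ‖Γ b‖ := Real.sqrt_sq (norm_nonneg _)
  -- construction of the right regular representation
  have hrho_ex : ∀ a : B, ∃ T : H →L[ℂ] H, ∀ c : B, T (Γ c) = Γ (c * a) := by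
    intro a
    have hbound : ∀ c : B, ‖Γ (c * a)‖ ≤ Real.sqrt ‖lamB (a * star a)‖ * ‖Γ c‖ := by
      intro c
      have e1 : (inner ℂ (Γ (c*a)) (Γ (c*a)) : ℂ)
          = inner ℂ (Γ (star c)) (lamB (a * star a) (Γ (star c))) := by
        rw [hlamB, hΓ, hΓ]
        have h1 : star (c*a) * (c*a) = (star a * star c) * (c * a) := by
          simp [star_mul]
        have h2 : (c * a) * (star a * star c) = star (star c) * ((a * star a) * star c) := by
          simp [mul_assoc, star_star]
        rw [h1, httr, h2]
      have e2 : (‖Γ (c*a)‖)^2 ≤ ‖lamB (a * star a)‖ * (‖Γ c‖)^2 := by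
        have h3 : (‖Γ (c*a)‖)^2 = RCLike.re (inner ℂ (Γ (c*a)) (Γ (c*a)) : ℂ) :=
          (inner_self_eq_norm_sq (𝕜 := ℂ) _).symm
        rw [h3, e1]
        calc RCLike.re (inner ℂ (Γ (star c)) (lamB (a * star a) (Γ (star c))) : ℂ)
            ≤ ‖(inner ℂ (Γ (star c)) (lamB (a * star a) (Γ (star c))) : ℂ)‖ := RCLike.re_le_norm _
          _ ≤ ‖Γ (star c)‖ * ‖lamB (a * star a) (Γ (star c))‖ := norm_inner_le_norm _ _
          _ ≤ ‖Γ (star c)‖ * (‖lamB (a * star a)‖ * ‖Γ (star c)‖) := by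
              gcongr
              exact ContinuousLinearMap.le_opNorm _ _
          _ = ‖lamB (a * star a)‖ * (‖Γ c‖)^2 := by rw [hnormstar]; ring
      calc ‖Γ (c * a)‖ = Real.sqrt ((‖Γ (c*a)‖)^2) := (Real.sqrt_sq (norm_nonneg _)).symm
        _ ≤ Real.sqrt (‖lamB (a * star a)‖ * (‖Γ c‖)^2) := Real.sqrt_le_sqrt e2
        _ = Real.sqrt ‖lamB (a * star a)‖ * ‖Γ c‖ := by
            rw [Real.sqrt_mul (norm_nonneg _), Real.sqrt_sq (norm_nonneg _)]
    obtain ⟨T, hT⟩ := exists_clm_extend Γ hΓinj hΓdense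
      (Γ ∘ₗ (LinearMap.mulRight ℂ a)) (Real.sqrt ‖lamB (a * star a)‖)
      (fun c => by simpa using hbound c)
    exact ⟨T, fun c => by simpa using hT c⟩
  choose rho hrho using hrho_ex
  -- construction of the modular conjugation J
  have hJ_ex : ∃ T : H →L[ℝ] H, ∀ b : B, T (Γ b) = Γ (star b) := by
    let ΓR : B →ₗ[ℝ] H :=
      { toFun := fun b => Γ b
        map_add' := fun b c => by simp
        map_smul' := fun r b => by
          simp only [RingHom.id_apply, ← Complex.coe_smul, map_smul] }
    let gJ : B →ₗ[ℝ] H :=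
      { toFun := fun b => Γ (star b)
        map_add' := fun b c => by simp [star_add]
        map_smul' := fun r b => by
          simp only [RingHom.id_apply, ← Complex.coe_smul, star_smul, map_smul,
            Complex.star_def, Complex.conj_ofReal] }
    have hinjR : Function.Injective ΓR := fun a b h => hΓinj h
    have hdenseR : DenseRange ΓR := hΓdense
    obtain ⟨T, hT⟩ := exists_clm_extend ΓR hinjR hdenseR gJ 1
      (fun b => by simpa [ΓR, gJ] using (hnormstar b).le)
    exact ⟨T, fun b => hT b⟩
  obtain ⟨J, hJ⟩ := hJ_ex

  -- vector extensionality against the dense range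
  have hvext : ∀ {u v : H}, (∀ c : B, (inner ℂ (Γ c) u : ℂ) = inner ℂ (Γ c) v) → u = v :=
    fun {u v} h => dense_inner_ext Γ hΓdense h
  -- adjoints of lamB and rho
  have hlam_adj : ∀ b : B, adjoint (lamB b) = lamB (star b) := by
    intro b
    refine ContinuousLinearMap.ext
      (dense_ext Γ hΓdense (adjoint (lamB b)).continuous (lamB (star b)).continuous ?_)
    intro c
    apply hvext
    intro d
    rw [ContinuousLinearMap.adjoint_inner_right, hlamB, hlamB, hΓ, hΓ]
    have h1 : star (b * d) * c = star d * (star b * c) := by simp [star_mul, mul_assoc]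
    rw [h1]
  have hrho_adj : ∀ b : B, adjoint (rho b) = rho (star b) := by
    intro b
    refine ContinuousLinearMap.ext
      (dense_ext Γ hΓdense (adjoint (rho b)).continuous (rho (star b)).continuous ?_)
    intro c
    apply hvext
    intro d
    rw [ContinuousLinearMap.adjoint_inner_right, hrho, hrho, hΓ, hΓ]
    have h1 : star (d * b) * c = star b * (star d * c) := by simp [star_mul, mul_assoc]
    have h2 : (star d * c) * star b = star d * (c * star b) := mul_assoc _ _ _
    rw [h1, httr, h2]
  -- inner-product moves
  have hlam_move : ∀ (b : B) (u v : H), (inner ℂ (lamB b u) v : ℂ) = inner ℂ u (lamB (star b) v) := by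
    intro b u v
    have h : adjoint (lamB (star b)) = lamB b := by rw [hlam_adj, star_star]
    rw [← h, ContinuousLinearMap.adjoint_inner_left]
  have hrho_move : ∀ (b : B) (u v : H), (inner ℂ (rho b u) v : ℂ) = inner ℂ u (rho (star b) v) := by
    intro b u v
    have h : adjoint (rho (star b)) = rho b := by rw [hrho_adj, star_star]
    rw [← h, ContinuousLinearMap.adjoint_inner_left]
  -- lamB and rho commute
  have hlamrho : ∀ (b c : B) (ξ : H), lamB b (rho c ξ) = rho c (lamB b ξ) := by
    intro b c
    apply dense_ext Γ hΓdense (by fun_prop) (by fun_prop)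
    intro d
    show lamB b (rho c (Γ d)) = rho c (lamB b (Γ d))
    rw [hrho, hlamB, hlamB, hrho, mul_assoc]
  have hrho_cent : ∀ b : B, rho b ∈ Set.centralizer (Set.range lamB) := by
    intro b
    rw [Set.mem_centralizer_iff]
    rintro _ ⟨b', rfl⟩
    refine ContinuousLinearMap.ext (fun ξ => ?_)
    show lamB b' (rho b ξ) = rho b (lamB b' ξ)
    exact hlamrho b' b ξ
  -- the orthogonal projection onto K, on Γ-vectors
  have hperp : ∀ (c : B) (v : H), v ∈ K → (inner ℂ (Γ c - Γ (EA c)) v : ℂ) = 0 := by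
    intro c v hv
    have hvmem : v ∈ closure
        ((Submodule.map Γ (Subalgebra.toSubmodule A.toSubalgebra) : Submodule ℂ H) : Set H) := by
      rw [← Submodule.topologicalClosure_coe, ← hK]; exact hv
    have hsub : ((Submodule.map Γ (Subalgebra.toSubmodule A.toSubalgebra) : Submodule ℂ H) : Set H)
        ⊆ {w : H | (inner ℂ (Γ c - Γ (EA c)) w : ℂ) = 0} := by
      rintro w ⟨a, ha, rfl⟩
      have ha' : a ∈ A := by simpa using ha
      have h1 : EA (star c * a) = EA (star c) * a := by
        have h := hEAbimod 1 hA1 a ha' (star c)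
        simpa using h
      show (inner ℂ (Γ c - Γ (EA c)) (Γ a) : ℂ) = 0
      rw [inner_sub_left, hΓ, hΓ, ← hEAstar, ← h1, hEAtr, sub_self]
    have hcl : IsClosed {w : H | (inner ℂ (Γ c - Γ (EA c)) w : ℂ) = 0} :=
      isClosed_eq (continuous_const.inner continuous_id) continuous_const
    exact hcl.closure_subset_iff.mpr hsub hvmem
  have heΓ : ∀ b : B, ((P (Γ b) : K) : H) = Γ (EA b) := by
    intro b
    have h : ((P (Γ b) : K) : H) = Γ (EA b) :=
      Submodule.eq_starProjection_of_mem_of_inner_eq_zero (K := K) (hΓA _ (hEAmem b))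
      (fun w hw => hperp b w hw)
    rw [h]
  have hKtest : ∀ (c : B) (v : H), v ∈ K → (inner ℂ (Γ c) v : ℂ) = inner ℂ (Γ (EA c)) v := by
    intro c v hv
    have h := hperp c v hv
    rw [inner_sub_left, sub_eq_zero] at h
    exact h
  have hein : ∀ (v : H), v ∈ K → ∀ ξ : H, (inner ℂ v ((P ξ : K) : H) : ℂ) = inner ℂ v ξ := by
    intro v hv ξ
    have h2 : ((P v : K) : H) = v := by rw [hPdef]; exact K.starProjection_eq_self_iff.mpr hv
    have h : (inner ℂ ((P v : K) : H) ξ : ℂ) = inner ℂ v ((P ξ : K) : H) :=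
      Submodule.inner_starProjection_left_eq_right K v ξ
    rw [← h, h2]
  have hein' : ∀ (ξ : H) (v : H), v ∈ K → (inner ℂ ((P ξ : K) : H) v : ℂ) = inner ℂ ξ v := by
    intro ξ v hv
    rw [← inner_conj_symm, hein v hv ξ, inner_conj_symm]
  -- properties of J
  have hJJ : ∀ ξ : H, J (J ξ) = ξ := by
    apply dense_ext Γ hΓdense (by fun_prop) continuous_id
    intro b
    show J (J (Γ b)) = Γ b
    rw [hJ, hJ, star_star]
  have hJinner1 : ∀ (b : B) (η : H), (inner ℂ (J (Γ b)) (J η) : ℂ) = inner ℂ η (Γ b) := by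
    intro b
    apply dense_ext Γ hΓdense (Continuous.inner continuous_const J.continuous)
      (Continuous.inner continuous_id continuous_const)
    intro c
    show (inner ℂ (J (Γ b)) (J (Γ c)) : ℂ) = inner ℂ (Γ c) (Γ b)
    rw [hJ, hJ, hΓ, hΓ, star_star, httr]
  have hJinner : ∀ (ξ η : H), (inner ℂ (J ξ) (J η) : ℂ) = inner ℂ η ξ := by
    intro ξ η
    revert ξ
    apply dense_ext Γ hΓdense (Continuous.inner J.continuous continuous_const)
      (Continuous.inner continuous_const continuous_id)
    intro b
    exact hJinner1 b η
  have hJK : ∀ v ∈ K, J v ∈ K := by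
    intro v hv
    have hmap : Set.MapsTo J
        ((Submodule.map Γ (Subalgebra.toSubmodule A.toSubalgebra) : Submodule ℂ H) : Set H)
        ((Submodule.map Γ (Subalgebra.toSubmodule A.toSubalgebra) : Submodule ℂ H) : Set H) := by
      rintro w ⟨a, ha, rfl⟩
      have ha' : a ∈ A := by simpa using ha
      refine ⟨star a, ?_, (hJ a).symm⟩
      simpa using (star_mem ha' : star a ∈ A)
    have hclos := hmap.closure J.continuous
    have hv' : v ∈ closure
        ((Submodule.map Γ (Subalgebra.toSubmodule A.toSubalgebra) : Submodule ℂ H) : Set H) := by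
      rw [← Submodule.topologicalClosure_coe, ← hK]; exact hv
    have h2 := hclos hv'
    rw [← Submodule.topologicalClosure_coe, ← hK] at h2
    exact h2
  have hJlam : ∀ (b : B) (ξ : H), lamB b (J ξ) = J (rho (star b) ξ) := by
    intro b
    apply dense_ext Γ hΓdense (by fun_prop) (by fun_prop)
    intro c
    show lamB b (J (Γ c)) = J (rho (star b) (Γ c))
    rw [hJ, hlamB, hrho, hJ, star_mul, star_star]
  have hJrho : ∀ (b : B) (ξ : H), rho b (J ξ) = J (lamB (star b) ξ) := by
    intro b
    apply dense_ext Γ hΓdense (by fun_prop) (by fun_prop)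
    intro c
    show rho b (J (Γ c)) = J (lamB (star b) (Γ c))
    rw [hJ, hrho, hlamB, hJ, star_mul, star_star]
  -- bimodule consequences
  have hbim_l : ∀ a ∈ A, ∀ b : B, EA (a * b) = a * EA b := by
    intro a ha b; simpa using hEAbimod a ha 1 hA1 b
  have hbim_r : ∀ a ∈ A, ∀ b : B, EA (b * a) = EA b * a := by
    intro a ha b; simpa using hEAbimod 1 hA1 a ha b
  -- P commutes with lamB a and rho a for a ∈ A
  have hPlam : ∀ a ∈ A, ∀ ξ : H, ((P (lamB a ξ) : K) : H) = lamB a ((P ξ : K) : H) := by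
    intro a ha
    apply dense_ext Γ hΓdense
      (continuous_subtype_val.comp (P.continuous.comp (lamB a).continuous))
      ((lamB a).continuous.comp (continuous_subtype_val.comp P.continuous))
    intro b
    show ((P (lamB a (Γ b)) : K) : H) = lamB a ((P (Γ b) : K) : H)
    rw [hlamB, heΓ, heΓ, hbim_l a ha b, ← hlamB]
  have hPrho : ∀ a ∈ A, ∀ ξ : H, ((P (rho a ξ) : K) : H) = rho a ((P ξ : K) : H) := by
    intro a ha
    apply dense_ext Γ hΓdense
      (continuous_subtype_val.comp (P.continuous.comp (rho a).continuous))
      ((rho a).continuous.comp (continuous_subtype_val.comp P.continuous))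
    intro b
    show ((P (rho a (Γ b)) : K) : H) = rho a ((P (Γ b) : K) : H)
    rw [hrho, heΓ, heΓ, hbim_r a ha b, ← hrho]
  have hPΓA : ∀ a ∈ A, ((P (Γ a) : K) : H) = Γ a := by
    intro a ha; rw [heΓ, hEAid a ha]
  -- adjoint of lamA
  have hlamA_adj : ∀ a ∈ A, adjoint (lamA a) = lamA (star a) := by
    intro a ha
    refine ((ContinuousLinearMap.eq_adjoint_iff (lamA (star a)) (lamA a)).mpr ?_).symm
    intro u v
    rw [Submodule.coe_inner, Submodule.coe_inner, hlamA (star a) (star_mem ha) u,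
      hlamA a ha v, hlam_move (star a), star_star]
  -- lifting commutation with lamA to H
  have hliftlam : ∀ (u : K →L[ℂ] K), (∀ a ∈ A, ∀ k : K, lamA a (u k) = u (lamA a k)) →
      ∀ a ∈ A, ∀ ξ : H, lamB a ((u (P ξ) : K) : H) = ((u (P (lamB a ξ)) : K) : H) := by
    intro u hu a ha ξ
    have h1 : P (lamB a ξ) = lamA a (P ξ) := by
      apply Subtype.ext
      rw [hlamA a ha]
      exact hPlam a ha ξ
    rw [h1, ← hu a ha (P ξ), hlamA a ha]
  -- moving a compressed operator to the other side of an inner ℂ product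
  have hzt_move : ∀ (zz : K →L[ℂ] K) (u v : H),
      (inner ℂ u ((zz (P v) : K) : H) : ℂ) = inner ℂ ((adjoint zz (P u) : K) : H) v := by
    intro zz u v
    calc (inner ℂ u ((zz (P v) : K) : H) : ℂ)
        = inner ℂ ((P u : K) : H) ((zz (P v) : K) : H) := (hein' u _ (Submodule.coe_mem _)).symm
      _ = inner ℂ (P u) (zz (P v)) := (Submodule.coe_inner K _ _).symm
      _ = inner ℂ (adjoint zz (P u)) (P v) :=
          (ContinuousLinearMap.adjoint_inner_left zz (P v) (P u)).symm
      _ = inner ℂ ((adjoint zz (P u) : K) : H) ((P v : K) : H) := Submodule.coe_inner K _ _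
      _ = inner ℂ ((adjoint zz (P u) : K) : H) v := hein _ (Submodule.coe_mem _) v
  -- the double commutant is star-closed
  have hstar_dc : ∀ x ∈ doubleCommutant (Set.range lamB),
      adjoint x ∈ doubleCommutant (Set.range lamB) := by
    intro x hx
    have h1 : ∀ u ∈ Set.centralizer (Set.range lamB),
        star u ∈ Set.centralizer (Set.range lamB) := by
      intro u hu
      refine Set.star_mem_centralizer' ?_ hu
      rintro _ ⟨b, rfl⟩
      exact ⟨star b, ((ContinuousLinearMap.star_eq_adjoint (lamB b)).trans (hlam_adj b)).symm⟩
    rw [← ContinuousLinearMap.star_eq_adjoint]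
    exact Set.star_mem_centralizer' h1 hx
  -- vacuum vector facts
  have hlamΩ : ∀ b : B, lamB b (Γ 1) = Γ b := by intro b; rw [hlamB, mul_one]
  have hrhoΩ : ∀ b : B, rho b (Γ 1) = Γ b := by intro b; rw [hrho, one_mul]
  have hrho_move' : ∀ (b : B) (u v : H), (inner ℂ u (rho b v) : ℂ) = inner ℂ (rho (star b) u) v := by
    intro b u v; rw [hrho_move (star b) u v, star_star]
  -- the core commutation: compressions of M_B commute with the commutant of lamA(A)
  have hcore : ∀ x ∈ doubleCommutant (Set.range lamB), ∀ z : K →L[ℂ] K,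
      z ∈ Set.centralizer (lamA '' (A : Set B)) →
      ∀ k : K, z (P (x ((k : K) : H))) = P (x ((z k : K) : H)) := by
    intro x hx z hz
    have hxd := hstar_dc x hx
    have hx_rho : ∀ (b : B) (ξ : H), x (rho b ξ) = rho b (x ξ) := by
      intro b ξ
      have h := Set.mem_centralizer_iff.mp hx (rho b) (hrho_cent b)
      have h2 := DFunLike.congr_fun h ξ
      simp only [ContinuousLinearMap.mul_apply] at h2
      exact h2.symm
    have hxd_rho : ∀ (b : B) (ξ : H), adjoint x (rho b ξ) = rho b (adjoint x ξ) := by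
      intro b ξ
      have h := Set.mem_centralizer_iff.mp hxd (rho b) (hrho_cent b)
      have h2 := DFunLike.congr_fun h ξ
      simp only [ContinuousLinearMap.mul_apply] at h2
      exact h2.symm
    have hzc : ∀ a ∈ A, ∀ k : K, lamA a (z k) = z (lamA a k) := by
      intro a ha k
      have h := Set.mem_centralizer_iff.mp hz (lamA a) ⟨a, ha, rfl⟩
      have h2 := DFunLike.congr_fun h k
      simp only [ContinuousLinearMap.mul_apply] at h2
      exact h2
    have hzdc : ∀ a ∈ A, ∀ k : K, lamA a (adjoint z k) = adjoint z (lamA a k) := by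
      intro a ha k
      have h := Set.mem_centralizer_iff.mp hz (lamA (star a)) ⟨star a, star_mem ha, rfl⟩
      rw [ContinuousLinearMap.mul_def, ContinuousLinearMap.mul_def] at h
      have h2 := congrArg adjoint h
      rw [ContinuousLinearMap.adjoint_comp, ContinuousLinearMap.adjoint_comp,
        hlamA_adj (star a) (star_mem ha), star_star] at h2
      have h3 := DFunLike.congr_fun h2 k
      simp only [ContinuousLinearMap.coe_comp', Function.comp_apply] at h3
      exact h3.symm
    -- vacuum identities
    have hVx : adjoint x (Γ 1) = J (x (Γ 1)) := by
      apply hvext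
      intro c
      calc (inner ℂ (Γ c) (adjoint x (Γ 1)) : ℂ)
          = inner ℂ (rho c (Γ 1)) (adjoint x (Γ 1)) := by rw [hrhoΩ]
        _ = inner ℂ (Γ 1) (rho (star c) (adjoint x (Γ 1))) := hrho_move c _ _
        _ = inner ℂ (Γ 1) (adjoint x (rho (star c) (Γ 1))) := by rw [hxd_rho]
        _ = inner ℂ (Γ 1) (adjoint x (Γ (star c))) := by rw [hrhoΩ]
        _ = inner ℂ (x (Γ 1)) (Γ (star c)) := ContinuousLinearMap.adjoint_inner_right x _ _
        _ = inner ℂ (J (Γ (star c))) (J (x (Γ 1))) := (hJinner _ _).symm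
        _ = inner ℂ (Γ c) (J (x (Γ 1))) := by rw [hJ, star_star]
    have hVz : ((z (P (Γ 1)) : K) : H) = J ((adjoint z (P (Γ 1)) : K) : H) := by
      apply hvext
      intro c
      have hJηK : J ((adjoint z (P (Γ 1)) : K) : H) ∈ K := hJK _ (Submodule.coe_mem _)
      calc (inner ℂ (Γ c) ((z (P (Γ 1)) : K) : H) : ℂ)
          = inner ℂ (Γ (EA c)) ((z (P (Γ 1)) : K) : H) := hKtest c _ (Submodule.coe_mem _)
        _ = inner ℂ (lamB (EA c) (Γ 1)) ((z (P (Γ 1)) : K) : H) := by rw [hlamΩ]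
        _ = inner ℂ (Γ 1) (lamB (star (EA c)) ((z (P (Γ 1)) : K) : H)) := hlam_move _ _ _
        _ = inner ℂ (Γ 1) ((z (P (lamB (star (EA c)) (Γ 1))) : K) : H) := by
            rw [hliftlam z (fun a ha k => hzc a ha k) (star (EA c)) (star_mem (hEAmem c)) (Γ 1)]
        _ = inner ℂ (Γ 1) ((z (P (Γ (star (EA c)))) : K) : H) := by rw [hlamΩ]
        _ = inner ℂ ((adjoint z (P (Γ 1)) : K) : H) (Γ (star (EA c))) := hzt_move z _ _
        _ = inner ℂ (J (Γ (star (EA c)))) (J ((adjoint z (P (Γ 1)) : K) : H)) :=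
            (hJinner _ _).symm
        _ = inner ℂ (Γ (EA c)) (J ((adjoint z (P (Γ 1)) : K) : H)) := by rw [hJ, star_star]
        _ = inner ℂ (Γ c) (J ((adjoint z (P (Γ 1)) : K) : H)) := (hKtest c _ hJηK).symm
    -- the key identity on Γ(A)-vectors
    have hAA : ∀ a ∈ A,
        ((z (P (x (Γ a))) : K) : H) = ((P (x ((z (P (Γ a)) : K) : H)) : K) : H) := by
      intro a ha
      apply hvext
      intro c
      have ha' : EA c ∈ A := hEAmem c
      have hPc : P (Γ c) = P (Γ (EA c)) :=
        Subtype.ext (by rw [heΓ, heΓ, hEAid (EA c) ha'])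
      have hη : ((adjoint z (P (Γ (EA c))) : K) : H)
          = lamB (EA c) ((adjoint z (P (Γ 1)) : K) : H) := by
        have h0 := hliftlam (adjoint z) (fun a ha k => hzdc a ha k) (EA c) ha' (Γ 1)
        rw [hlamΩ] at h0
        exact h0.symm
      have hz2 : ((z (P (Γ a)) : K) : H) = lamB a ((z (P (Γ 1)) : K) : H) := by
        have h0 := hliftlam z (fun a ha k => hzc a ha k) a ha (Γ 1)
        rw [hlamΩ] at h0
        exact h0.symm
      have hLHS : (inner ℂ (Γ c) ((z (P (x (Γ a))) : K) : H) : ℂ)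
          = inner ℂ (rho (star a) ((adjoint z (P (Γ 1)) : K) : H))
              (lamB (star (EA c)) (x (Γ 1))) := by
        calc (inner ℂ (Γ c) ((z (P (x (Γ a))) : K) : H) : ℂ)
            = inner ℂ ((adjoint z (P (Γ c)) : K) : H) (x (Γ a)) := hzt_move z _ _
          _ = inner ℂ ((adjoint z (P (Γ (EA c))) : K) : H) (x (Γ a)) := by rw [hPc]
          _ = inner ℂ (lamB (EA c) ((adjoint z (P (Γ 1)) : K) : H)) (x (Γ a)) := by rw [hη]
          _ = inner ℂ (lamB (EA c) ((adjoint z (P (Γ 1)) : K) : H)) (x (rho a (Γ 1))) := by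
              rw [hrhoΩ a]
          _ = inner ℂ (lamB (EA c) ((adjoint z (P (Γ 1)) : K) : H)) (rho a (x (Γ 1))) := by
              rw [hx_rho]
          _ = inner ℂ (rho (star a) (lamB (EA c) ((adjoint z (P (Γ 1)) : K) : H))) (x (Γ 1)) :=
              hrho_move' a _ _
          _ = inner ℂ (lamB (EA c) (rho (star a) ((adjoint z (P (Γ 1)) : K) : H))) (x (Γ 1)) := by
              rw [← hlamrho]
          _ = inner ℂ (rho (star a) ((adjoint z (P (Γ 1)) : K) : H))
              (lamB (star (EA c)) (x (Γ 1))) := hlam_move _ _ _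
      have hRHS : (inner ℂ (Γ c) ((P (x ((z (P (Γ a)) : K) : H)) : K) : H) : ℂ)
          = inner ℂ (rho (star a) ((adjoint z (P (Γ 1)) : K) : H))
              (lamB (star (EA c)) (x (Γ 1))) := by
        calc (inner ℂ (Γ c) ((P (x ((z (P (Γ a)) : K) : H)) : K) : H) : ℂ)
            = inner ℂ (Γ (EA c)) ((P (x ((z (P (Γ a)) : K) : H)) : K) : H) :=
              hKtest c _ (Submodule.coe_mem _)
          _ = inner ℂ (Γ (EA c)) (x ((z (P (Γ a)) : K) : H)) :=
              hein (Γ (EA c)) (hΓA (EA c) ha') _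
          _ = inner ℂ (adjoint x (Γ (EA c))) ((z (P (Γ a)) : K) : H) :=
              (ContinuousLinearMap.adjoint_inner_left x _ _).symm
          _ = inner ℂ (adjoint x (rho (EA c) (Γ 1))) ((z (P (Γ a)) : K) : H) := by
              rw [hrhoΩ (EA c)]
          _ = inner ℂ (rho (EA c) (adjoint x (Γ 1))) ((z (P (Γ a)) : K) : H) := by
              rw [hxd_rho]
          _ = inner ℂ (rho (EA c) (J (x (Γ 1)))) ((z (P (Γ a)) : K) : H) := by rw [hVx]
          _ = inner ℂ (rho (EA c) (J (x (Γ 1))))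
              (lamB a (J ((adjoint z (P (Γ 1)) : K) : H))) := by rw [hz2, hVz]
          _ = inner ℂ (J (lamB (star (EA c)) (x (Γ 1))))
              (J (rho (star a) ((adjoint z (P (Γ 1)) : K) : H))) := by rw [hJrho, hJlam]
          _ = inner ℂ (rho (star a) ((adjoint z (P (Γ 1)) : K) : H))
              (lamB (star (EA c)) (x (Γ 1))) := hJinner _ _
      rw [hLHS, hRHS]
    -- extend to all of H by density and conclude
    have hPk : ∀ k : K, P ((k : K) : H) = k := fun k => hPι k
    have hFG : ∀ ξ : H, ((z (P (x ((P ξ : K) : H))) : K) : H)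
        = ((P (x ((z (P ξ) : K) : H)) : K) : H) := by
      apply dense_ext Γ hΓdense
        (continuous_subtype_val.comp (z.continuous.comp (P.continuous.comp
          (x.continuous.comp (continuous_subtype_val.comp P.continuous)))))
        (continuous_subtype_val.comp (P.continuous.comp
          (x.continuous.comp (continuous_subtype_val.comp (z.continuous.comp P.continuous)))))
      intro b
      show ((z (P (x ((P (Γ b) : K) : H))) : K) : H) = ((P (x ((z (P (Γ b)) : K) : H)) : K) : H)
      have hPb : P (Γ b) = P (Γ (EA b)) :=
        Subtype.ext (by rw [heΓ, heΓ, hEAid (EA b) (hEAmem b)])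
      rw [hPb, hPΓA (EA b) (hEAmem b)]
      exact hAA (EA b) (hEAmem b)
    intro k
    have h := hFG ((k : K) : H)
    rw [hPk] at h
    exact Subtype.ext h
  have hPk : ∀ k : K, P ((k : K) : H) = k := fun k => hPι k
  constructor
  · -- existence and uniqueness of the compression
    intro x hx
    refine ⟨P ∘L (x ∘L ι), ⟨?_, ?_⟩, ?_⟩
    · refine Set.mem_centralizer_iff.mpr (fun z hz => ?_)
      refine ContinuousLinearMap.ext (fun k => ?_)
      simp only [ContinuousLinearMap.mul_apply, ContinuousLinearMap.comp_apply]
      exact hcore x hx z hz k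
    · intro ξ
      rfl
    · rintro y' ⟨-, hy'⟩
      refine ContinuousLinearMap.ext (fun k => ?_)
      have h := hy' ((k : K) : H)
      rw [hPk] at h
      rw [← h]
      rfl
  · -- properties of any such map EE
    intro EE hEE
    have hEEeq : ∀ x ∈ doubleCommutant (Set.range lamB), ∀ k : K,
        EE x k = P (x ((k : K) : H)) := by
      intro x hx k
      have h := (hEE x hx).2 ((k : K) : H)
      rw [hPk] at h
      exact h.symm
    refine ⟨?_, ?_, ?_, ?_, ?_⟩
    · intro x hx x' hx'
      have hsum : x + x' ∈ doubleCommutant (Set.range lamB) :=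
        Set.add_mem_centralizer hx hx'
      refine ContinuousLinearMap.ext (fun k => ?_)
      rw [ContinuousLinearMap.add_apply, hEEeq _ hsum, hEEeq _ hx, hEEeq _ hx',
        ContinuousLinearMap.add_apply, map_add]
    · intro c x hx
      have hsm : c • x ∈ doubleCommutant (Set.range lamB) :=
        Set.mem_centralizer_iff.mpr (fun m hm => by
          rw [mul_smul_comm, smul_mul_assoc, Set.mem_centralizer_iff.mp hx m hm])
      refine ContinuousLinearMap.ext (fun k => ?_)
      rw [ContinuousLinearMap.smul_apply, hEEeq _ hsm, hEEeq _ hx,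
        ContinuousLinearMap.smul_apply, map_smul]
    · have hone : (1 : H →L[ℂ] H) ∈ doubleCommutant (Set.range lamB) :=
        Set.one_mem_centralizer
      refine ContinuousLinearMap.ext (fun k => ?_)
      rw [hEEeq _ hone]
      simp only [ContinuousLinearMap.one_apply]
      exact hPk k
    · intro x hx
      have hst : star x ∈ doubleCommutant (Set.range lamB) := by
        rw [ContinuousLinearMap.star_eq_adjoint]
        exact hstar_dc x hx
      refine ContinuousLinearMap.ext (fun k => ?_)
      rw [hEEeq _ hst]
      apply ext_inner_left ℂ
      intro v
      calc (inner ℂ v (P (star x ((k : K) : H))) : ℂ)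
          = inner ℂ ((v : K) : H) ((P (star x ((k : K) : H)) : K) : H) := Submodule.coe_inner K _ _
        _ = inner ℂ ((v : K) : H) (star x ((k : K) : H)) := hein _ (Submodule.coe_mem v) _
        _ = inner ℂ (x ((v : K) : H)) ((k : K) : H) := by
            rw [ContinuousLinearMap.star_eq_adjoint, ContinuousLinearMap.adjoint_inner_right]
        _ = inner ℂ ((P (x ((v : K) : H)) : K) : H) ((k : K) : H) :=
            (hein' _ _ (Submodule.coe_mem k)).symm
        _ = inner ℂ (P (x ((v : K) : H))) k := (Submodule.coe_inner K _ _).symm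
        _ = inner ℂ (EE x v) k := by rw [hEEeq x hx v]
        _ = inner ℂ v (star (EE x) k) := by
            rw [ContinuousLinearMap.star_eq_adjoint]
            exact (ContinuousLinearMap.adjoint_inner_right _ _ _).symm
    · intro x hx a ha
      rw [hEEeq x hx ⟨Γ a, hΓA a ha⟩, Submodule.coe_inner]
      exact hein (Γ 1) (hΓA 1 hA1) (x (Γ a))
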